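/- The indicator function of the set A₁ of eventually-zero sequences is not of Baire class 1 on ℓ∞: there is no sequence (gₙ) of continuous functions ℓ∞ → ℝ converging pointwise on ℓ∞ to the indicator function of A₁. -/

import Mathlib

open BoundedContinuousFunction Filter

/-- The set of eventually-zero sequences in ℓ∞. -/
def A₁ : Set (ℕ →ᵇ ℝ) := {x | ∃ m : ℕ, ∀ n ≥ m, x n = 0}

/-- Truncation of a bounded sequence at `m`. -/
noncomputable def trunc (z : ℕ →ᵇ ℝ) (m : ℕ) : ℕ →ᵇ ℝ :=
  BoundedContinuousFunction.ofNormedAddCommGroupDiscrete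
    (fun n => if n < m then z n else 0) ‖z‖ (by
      intro n
      split
      · exact z.norm_coe_le_norm n
      · simp)

lemma trunc_mem (z : ℕ →ᵇ ℝ) (m : ℕ) : trunc z m ∈ A₁ := by
  refine ⟨m, fun n hn => ?_⟩
  simp [trunc, BoundedContinuousFunction.ofNormedAddCommGroupDiscrete, Nat.not_lt.mpr hn]

lemma mem_closure_A₁ (z : ℕ →ᵇ ℝ) (hz : Tendsto (fun n => z n) atTop (nhds 0)) :
    z ∈ closure A₁ := by
  rw [Metric.mem_closure_iff]
  intro ε hε
  obtain ⟨m, hm⟩ := (Metric.tendsto_atTop.mp hz (ε / 2) (by linarith))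
  refine ⟨trunc z m, trunc_mem z m, ?_⟩
  have : dist z (trunc z m) ≤ ε / 2 := by
    refine (BoundedContinuousFunction.dist_le (by linarith)).mpr fun n => ?_
    simp only [trunc, BoundedContinuousFunction.ofNormedAddCommGroupDiscrete]
    by_cases h : n < m
    · simp [h]; linarith
    · have := hm n (Nat.not_lt.mp h)
      rw [Real.dist_eq, sub_zero] at this
      simp [h, Real.dist_eq]
      linarith
  linarith

/-- The geometric sequence `n ↦ (1/2)^n` as a bounded function. -/
noncomputable def geo : ℕ →ᵇ ℝ :=
  BoundedContinuousFunction.ofNormedAddCommGroupDiscrete (fun n => (1/2 : ℝ)^n) 1 (by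
    intro n
    rw [Real.norm_eq_abs, abs_of_nonneg (by positivity)]
    exact pow_le_one₀ (by norm_num) (by norm_num))

lemma geo_apply (n : ℕ) : geo n = (1/2 : ℝ)^n := rfl

lemma geo_norm_le : ‖geo‖ ≤ 1 := by
  refine (BoundedContinuousFunction.norm_le (by norm_num)).mpr fun n => ?_
  rw [geo_apply, Real.norm_eq_abs, abs_of_nonneg (by positivity)]
  exact pow_le_one₀ (by norm_num) (by norm_num)

lemma geo_tendsto : Tendsto (fun n => geo n) atTop (nhds 0) := by
  simpa [geo_apply] using tendsto_pow_atTop_nhds_zero_of_lt_one (by norm_num : (0:ℝ) ≤ 1/2) (by norm_num)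

theorem indicator_A₁_not_baire_one :
    ¬ ∃ g : ℕ → (ℕ →ᵇ ℝ) → ℝ, (∀ n, Continuous (g n)) ∧
      ∀ x : ℕ →ᵇ ℝ,
        Tendsto (fun n => g n x) atTop (nhds (A₁.indicator (fun _ => (1 : ℝ)) x)) := by
  rintro ⟨g, hg1, hg2⟩
  set f : (ℕ →ᵇ ℝ) → ℝ := A₁.indicator (fun _ => (1 : ℝ)) with hf
  set F : Set (ℕ →ᵇ ℝ) := closure A₁ with hF
  have hFclosed : IsClosed F := isClosed_closure
  haveI : CompleteSpace ↥F := hFclosed.completeSpace_coe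
  haveI : BaireSpace ↥F := inferInstance
  haveI : Nonempty ↥F := ⟨⟨0, subset_closure ⟨0, fun n _ => by simp⟩⟩⟩
  -- the closed "oscillation" sets
  set E : ℕ → Set ↥F := fun n =>
    ⋂ (p : ℕ) (q : ℕ) (_ : n ≤ p) (_ : n ≤ q),
      {x : ↥F | dist (g p x.val) (g q x.val) ≤ 1/3} with hE
  have hEclosed : ∀ n, IsClosed (E n) := by
    intro n
    refine isClosed_iInter fun p => isClosed_iInter fun q =>
      isClosed_iInter fun _ => isClosed_iInter fun _ => ?_
    exact isClosed_le (((hg1 p).comp continuous_subtype_val).dist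
      ((hg1 q).comp continuous_subtype_val)) continuous_const
  have hEunion : ⋃ n, E n = Set.univ := by
    ext x
    simp only [Set.mem_iUnion, Set.mem_univ, iff_true, hE, Set.mem_iInter, Set.mem_setOf_eq]
    have hc : CauchySeq (fun n => g n x.val) := (hg2 x.val).cauchySeq
    obtain ⟨N, hN⟩ := Metric.cauchySeq_iff.mp hc (1/3) (by norm_num)
    exact ⟨N, fun p q hp hq => (hN p hp q hq).le⟩
  obtain ⟨n, hn⟩ := nonempty_interior_of_iUnion_of_closed hEclosed hEunion
  obtain ⟨z, hz⟩ := hn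
  obtain ⟨r, hr, hball⟩ := Metric.isOpen_iff.mp isOpen_interior z hz
  have hballE : Metric.ball z r ⊆ E n := hball.trans interior_subset
  -- pick x ∈ A₁ close to z
  have hzF : (z : ℕ →ᵇ ℝ) ∈ closure A₁ := z.2
  obtain ⟨x, hxA, hxz⟩ := Metric.mem_closure_iff.mp hzF (r/2) (by linarith)
  -- continuity of g n at x gives δ₀
  obtain ⟨δ₀, hδ₀, hδ₀c⟩ := Metric.continuousAt_iff.mp ((hg1 n).continuousAt (x := x))
    (1/3) (by norm_num)
  set δ : ℝ := min (δ₀/2) (r/2) with hδ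
  have hδpos : 0 < δ := lt_min (by linarith) (by linarith)
  set y : ℕ →ᵇ ℝ := x + δ • geo with hy
  -- y is close to x
  have hyx : dist y x ≤ δ := by
    rw [dist_eq_norm]
    have : y - x = δ • geo := by rw [hy]; abel
    rw [this]
    calc ‖δ • geo‖ = ‖δ‖ * ‖geo‖ := norm_smul δ geo
      _ ≤ ‖δ‖ * 1 := by nlinarith [geo_norm_le, norm_nonneg δ]
      _ = δ := by rw [mul_one, Real.norm_eq_abs, abs_of_pos hδpos]
  -- x tends to 0 pointwise
  obtain ⟨m, hm⟩ := id hxA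
  have hxt : Tendsto (fun n => x n) atTop (nhds 0) := by
    refine Tendsto.congr' ?_ tendsto_const_nhds
    filter_upwards [eventually_atTop.mpr ⟨m, fun n hn => hm n hn⟩] with n h using h.symm
  -- y ∈ F
  have hyF : y ∈ F := by
    apply mem_closure_A₁
    have : Tendsto (fun n => x n + δ * geo n) atTop (nhds (0 + δ * 0)) :=
      hxt.add (geo_tendsto.const_mul δ)
    simp only [add_zero, mul_zero] at this
    refine this.congr fun n => ?_
    simp [hy, smul_eq_mul]
  -- y ∉ A₁
  have hyA : y ∉ A₁ := by
    rintro ⟨m', hm'⟩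
    have h1 : y (max m m') = x (max m m') + δ * geo (max m m') := by
      simp [hy, smul_eq_mul]
    rw [hm' (max m m') (le_max_right _ _)] at h1
    rw [hm (max m m') (le_max_left _ _)] at h1
    have : δ * geo (max m m') ≠ 0 := by
      apply mul_ne_zero hδpos.ne'
      rw [geo_apply]
      positivity
    exact this (by linarith)
  -- the subtype points
  have hxF : x ∈ F := subset_closure hxA
  set X : ↥F := ⟨x, hxF⟩ with hX
  set Y : ↥F := ⟨y, hyF⟩ with hY
  have hXball : X ∈ Metric.ball z r := by
    rw [Metric.mem_ball, Subtype.dist_eq]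
    calc dist x z.val < r/2 := by rwa [dist_comm] at hxz
      _ < r := by linarith
  have hYball : Y ∈ Metric.ball z r := by
    rw [Metric.mem_ball, Subtype.dist_eq]
    calc dist y z.val ≤ dist y x + dist x z.val := dist_triangle _ _ _
      _ < δ + r/2 := by
          have : dist x z.val < r/2 := by rwa [dist_comm] at hxz
          linarith [hyx]
      _ ≤ r/2 + r/2 := by have := min_le_right (δ₀/2) (r/2); linarith
      _ = r := by ring
  -- the key estimate on E n
  have key : ∀ (w : ↥F), w ∈ E n → dist (f w.val) (g n w.val) ≤ 1/3 := by
    intro w hw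
    simp only [hE, Set.mem_iInter, Set.mem_setOf_eq] at hw
    have hlim : Tendsto (fun p => dist (g p w.val) (g n w.val)) atTop
        (nhds (dist (f w.val) (g n w.val))) := (hg2 w.val).dist tendsto_const_nhds
    refine le_of_tendsto hlim ?_
    filter_upwards [eventually_ge_atTop n] with p hp using hw p n hp le_rfl
  have hx13 : dist (f x) (g n x) ≤ 1/3 := key X (hballE hXball)
  have hy13 : dist (f y) (g n y) ≤ 1/3 := key Y (hballE hYball)
  have hfx : f x = 1 := Set.indicator_of_mem hxA _
  have hfy : f y = 0 := Set.indicator_of_notMem hyA _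
  have hgc : dist (g n y) (g n x) < 1/3 := by
    apply hδ₀c
    calc dist y x ≤ δ := hyx
      _ ≤ δ₀/2 := min_le_left _ _
      _ < δ₀ := by linarith
  rw [hfx, Real.dist_eq] at hx13
  rw [hfy, Real.dist_eq] at hy13
  rw [Real.dist_eq] at hgc
  have h1 := abs_le.mp hx13
  have h2 := abs_le.mp hy13
  have h3 := abs_lt.mp hgc
  -- 1 - g n x ≤ 1/3 so g n x ≥ 2/3; |g n y| ≤ 1/3; |g n y - g n x| < 1/3
  obtain ⟨a1, a2⟩ := h1
  obtain ⟨b1, b2⟩ := h2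
  obtain ⟨c1, c2⟩ := h3
  linarith
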